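/- Let K be a compact metric space and φ : C(K) → ℝ a max-stable monetary risk measure. Then φ(f) = max_{x ∈ K} { f(x) − I_min(x) } for all f ∈ C(K), where I_min(x) = sup_{f ∈ C(K)} { f(x) − φ(f) }. -/

import Mathlib

open MeasureTheory Set Metric Filter Topology

noncomputable section

/-- The bounded Borel measurable functions on `S`. -/
def Bb (S : Type*) [MeasurableSpace S] : Set (S → ℝ) :=
  {f | Measurable f ∧ ∃ C : ℝ, ∀ x, |f x| ≤ C}

/-- `φ` is a monetary risk measure on the class of functions `X`:
normalization, translation property and monotonicity. -/
def Monetary {S : Type*} (X : Set (S → ℝ)) (φ : (S → ℝ) → ℝ) : Prop :=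
  φ 0 = 0 ∧
  (∀ f ∈ X, ∀ c : ℝ, φ (f + fun _ => c) = φ f + c) ∧
  (∀ f ∈ X, ∀ g ∈ X, (∀ x, f x ≤ g x) → φ f ≤ φ g)

/-- `φ` is max-stable on `X`. -/
def MaxStable {S : Type*} (X : Set (S → ℝ)) (φ : (S → ℝ) → ℝ) : Prop :=
  ∀ f ∈ X, ∀ g ∈ X, φ (f ⊔ g) ≤ max (φ f) (φ g)

/-- The concentration function `J_A = inf_{r ∈ ℝ} φ(r · 1_{Aᶜ})`. -/
def conc {S : Type*} (φ : (S → ℝ) → ℝ) (A : Set S) : EReal :=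
  ⨅ r : ℝ, (φ (Aᶜ.indicator fun _ => r) : EReal)

/-- The minimal rate function `I_min(x) = sup_{f ∈ C_b(S)} (f(x) - φ(f))`,
with values in `[0, +∞] ⊆ EReal`. -/
def IminE {S : Type*} [TopologicalSpace S] (φ : (S → ℝ) → ℝ) (x : S) : EReal :=
  ⨆ f : BoundedContinuousFunction S ℝ, ((f x - φ ⇑f : ℝ) : EReal)

theorem aux_sup' {K : Type*} [TopologicalSpace K]
    (φ : C(K, ℝ) → ℝ)
    (hms : ∀ f g : C(K, ℝ), φ (f ⊔ g) ≤ max (φ f) (φ g))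
    {ι : Type*} (t : Finset ι) (ht : t.Nonempty) (h : ι → C(K, ℝ)) :
    φ (t.sup' ht h) ≤ t.sup' ht (fun i => φ (h i)) := by
  induction ht using Finset.Nonempty.cons_induction with
  | singleton a => simp
  | cons a s ha hs ih =>
    rw [Finset.sup'_cons (H := hs), Finset.sup'_cons (H := hs)]
    exact (hms _ _).trans (max_le_max le_rfl ih)

theorem stmt6 {K : Type*} [MetricSpace K] [CompactSpace K] [Nonempty K]
    (φ : C(K, ℝ) → ℝ)
    (hN : φ 0 = 0)
    (hT : ∀ (f : C(K, ℝ)) (c : ℝ), φ (f + ContinuousMap.const K c) = φ f + c)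
    (hM : ∀ f g : C(K, ℝ), f ≤ g → φ f ≤ φ g)
    (hms : ∀ f g : C(K, ℝ), φ (f ⊔ g) ≤ max (φ f) (φ g)) :
    ∀ f : C(K, ℝ), ∃ x : K,
      ((φ f : ℝ) : EReal) =
        ((f x : ℝ) : EReal) - (⨆ g : C(K, ℝ), ((g x - φ g : ℝ) : EReal)) ∧
      ∀ y : K,
        ((f y : ℝ) : EReal) - (⨆ g : C(K, ℝ), ((g y - φ g : ℝ) : EReal)) ≤
          ((φ f : ℝ) : EReal) := by
  intro f
  -- key existence claim
  have key : ∃ x : K, ∀ g : C(K, ℝ), g x - φ g ≤ f x - φ f := by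
    by_contra hcon
    push_neg at hcon
    choose g hg using hcon
    -- ε x > 0
    set ε : K → ℝ := fun x => (g x x - φ (g x)) - (f x - φ f) with hε
    have hεpos : ∀ x, 0 < ε x := fun x => by have := hg x; simp [hε]; linarith
    -- h x := g x + const (φ f - φ (g x) - ε x / 2)
    set h : K → C(K, ℝ) := fun x => g x + ContinuousMap.const K (φ f - φ (g x) - ε x / 2) with hh
    have hφh : ∀ x, φ (h x) = φ f - ε x / 2 := fun x => by
      rw [hh]; simp only; rw [hT]; ring
    have hhx : ∀ x, f x < h x x := fun x => by
      simp only [hh, ContinuousMap.add_apply, ContinuousMap.const_apply]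
      have := hεpos x
      simp only [hε] at this ⊢
      linarith
    -- open cover
    set U : K → Set K := fun x => {y | f y < h x y} with hU
    have hUopen : ∀ x, IsOpen (U x) := fun x =>
      isOpen_lt f.continuous (h x).continuous
    have hUcov : (univ : Set K) ⊆ ⋃ x, U x := fun y _ =>
      mem_iUnion.2 ⟨y, hhx y⟩
    obtain ⟨t, htcov⟩ := isCompact_univ.elim_finite_subcover U hUopen hUcov
    have htne : t.Nonempty := by
      rcases htcov (mem_univ (Classical.arbitrary K)) with ⟨_, ⟨x, rfl⟩, _, ⟨hx, rfl⟩, _⟩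
      exact ⟨x, hx⟩
    -- f ≤ sup
    have hfle : f ≤ t.sup' htne h := by
      intro y
      rcases htcov (mem_univ y) with ⟨_, ⟨x, rfl⟩, _, ⟨hx, rfl⟩, hyx⟩
      show f y ≤ (t.sup' htne h) y
      rw [ContinuousMap.sup'_apply]
      exact le_of_lt (lt_of_lt_of_le hyx (Finset.le_sup' (fun i => (h i) y) hx))
    have h1 : φ f ≤ φ (t.sup' htne h) := hM _ _ hfle
    have h2 : φ (t.sup' htne h) ≤ t.sup' htne (fun i => φ (h i)) := aux_sup' φ hms t htne h
    have h3 : t.sup' htne (fun i => φ (h i)) < φ f := by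
      rw [Finset.sup'_lt_iff]
      intro i _
      rw [hφh]
      exact sub_lt_self _ (half_pos (hεpos i))
    linarith
  obtain ⟨x, hx⟩ := key
  -- the sup at x equals f x - φ f
  have hsup : (⨆ g : C(K, ℝ), ((g x - φ g : ℝ) : EReal)) = ((f x - φ f : ℝ) : EReal) := by
    apply le_antisymm
    · exact iSup_le fun g => EReal.coe_le_coe_iff.2 (hx g)
    · exact le_iSup (fun g : C(K, ℝ) => ((g x - φ g : ℝ) : EReal)) f
  refine ⟨x, ?_, ?_⟩
  · rw [hsup, ← EReal.coe_sub, EReal.coe_eq_coe_iff]; ring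
  · intro y
    have hyI : ((f y - φ f : ℝ) : EReal) ≤ ⨆ g : C(K, ℝ), ((g y - φ g : ℝ) : EReal) :=
      le_iSup (fun g : C(K, ℝ) => ((g y - φ g : ℝ) : EReal)) f
    calc ((f y : ℝ) : EReal) - (⨆ g : C(K, ℝ), ((g y - φ g : ℝ) : EReal))
        ≤ ((f y : ℝ) : EReal) - ((f y - φ f : ℝ) : EReal) :=
          EReal.sub_le_sub le_rfl hyI
      _ = ((φ f : ℝ) : EReal) := by rw [← EReal.coe_sub, EReal.coe_eq_coe_iff]; ring
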